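/- Let n ≥ 2 and define e(v, u) := (n/2) λ_max(v ⊗ v − u) for v ∈ ℝⁿ, u ∈ Mₙ⁰. Then |v|²/2 ≤ e(v, u) for all (v, u) ∈ ℝⁿ × Mₙ⁰, with equality if and only if u = v ⊗ v − (|v|²/n) Iₙ. -/

import Mathlib

open scoped BigOperators

noncomputable section

/-- The Euclidean norm of a vector in `ℝ^m`. -/
def eNorm {m : ℕ} (v : Fin m → ℝ) : ℝ := Real.sqrt (∑ i, v i ^ 2)

/-- `Mₙ⁰`: the submodule of symmetric trace-free `n × n` real matrices. -/
def M0 (n : ℕ) : Submodule ℝ (Matrix (Fin n) (Fin n) ℝ) where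
  carrier := {A | A.IsSymm ∧ A.trace = 0}
  add_mem' := fun ha hb => ⟨ha.1.add hb.1, by rw [Matrix.trace_add, ha.2, hb.2, add_zero]⟩
  zero_mem' := ⟨Matrix.isSymm_zero, Matrix.trace_zero ..⟩
  smul_mem' := fun c _ hA => ⟨hA.1.smul c, by rw [Matrix.trace_smul, hA.2, smul_zero]⟩

/-- For `v ∈ ℝⁿ` and `u ∈ Mₙ⁰`, the matrix `v ⊗ v − u` is symmetric (hence Hermitian). -/
lemma herm_aux {n : ℕ} (v : Fin n → ℝ) (u : M0 n) :
    (Matrix.vecMulVec v v - (u : Matrix (Fin n) (Fin n) ℝ)).IsHermitian := by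
  rw [Matrix.IsHermitian, Matrix.conjTranspose_eq_transpose_of_trivial]
  have h1 : (Matrix.vecMulVec v v).IsSymm := by
    apply Matrix.IsSymm.ext
    intro i j
    simp [Matrix.vecMulVec_apply, mul_comm]
  exact h1.sub u.2.1

/-- `e(v, u) = (n/2) λ_max(v ⊗ v − u)`, where `λ_max` is the largest eigenvalue
of the symmetric matrix `v ⊗ v − u`. -/
def efun (n : ℕ) : (Fin n → ℝ) × M0 n → ℝ :=
  fun p => ((n : ℝ) / 2) * ⨆ i, (herm_aux p.1 p.2).eigenvalues i

/-- Sum of eigenvalues of a real symmetric matrix equals its trace. -/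
lemma sum_eig_eq_trace {n : ℕ} {A : Matrix (Fin n) (Fin n) ℝ} (hA : A.IsHermitian) :
    ∑ i, hA.eigenvalues i = A.trace := by
  conv_rhs => rw [hA.spectral_theorem, Unitary.conjStarAlgAut_apply]
  rw [Matrix.trace_mul_comm, ← Matrix.mul_assoc,
    (Matrix.mem_unitaryGroup_iff'.mp (hA.eigenvectorUnitary).2), Matrix.one_mul,
    Matrix.trace_diagonal]
  simp [RCLike.ofReal_real_eq_id]

/-- If `A = c • 1` then all eigenvalues of `A` are `c`. -/
lemma eig_smul_one {n : ℕ} {A : Matrix (Fin n) (Fin n) ℝ} (hA : A.IsHermitian) (c : ℝ)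
    (h : A = c • (1 : Matrix (Fin n) (Fin n) ℝ)) (i : Fin n) : hA.eigenvalues i = c := by
  have h2 : star (hA.eigenvectorUnitary : Matrix (Fin n) (Fin n) ℝ) * A *
      (hA.eigenvectorUnitary : Matrix (Fin n) (Fin n) ℝ)
      = Matrix.diagonal (RCLike.ofReal ∘ hA.eigenvalues) := by
    rw [← hA.conjStarAlgAut_star_eigenvectorUnitary, Unitary.conjStarAlgAut_star_apply]
  have h4 := congrArg (fun B => star (hA.eigenvectorUnitary : Matrix (Fin n) (Fin n) ℝ) * B *
    (hA.eigenvectorUnitary : Matrix (Fin n) (Fin n) ℝ)) h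
  rw [h4, Matrix.mul_smul, Matrix.smul_mul, Matrix.mul_one,
    (Matrix.mem_unitaryGroup_iff'.mp (hA.eigenvectorUnitary).2)] at h2
  have h3 : (c • (1 : Matrix (Fin n) (Fin n) ℝ)) i i
      = Matrix.diagonal (RCLike.ofReal ∘ hA.eigenvalues) i i := by rw [h2]
  simpa [RCLike.ofReal_real_eq_id] using h3.symm

/-- If all eigenvalues of a real symmetric matrix are `c`, then `A = c • 1`. -/
lemma eq_smul_one_of_eig_const {n : ℕ} {A : Matrix (Fin n) (Fin n) ℝ} (hA : A.IsHermitian)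
    (c : ℝ) (hall : ∀ i, hA.eigenvalues i = c) : A = c • (1 : Matrix (Fin n) (Fin n) ℝ) := by
  have := hA.spectral_theorem
  rw [show Matrix.diagonal (RCLike.ofReal ∘ hA.eigenvalues)
        = c • (1 : Matrix (Fin n) (Fin n) ℝ) by
      ext i j; by_cases h : i = j <;>
        simp [h, Matrix.diagonal, hall, RCLike.ofReal_real_eq_id]] at this
  rw [this, Unitary.conjStarAlgAut_apply, Matrix.mul_smul, Matrix.smul_mul, Matrix.mul_one,
    (Matrix.mem_unitaryGroup_iff.mp (hA.eigenvectorUnitary).2)]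

/-- `|v|²/2 ≤ e(v,u)`, with equality iff `u = v ⊗ v − (|v|²/n) Iₙ`. -/
theorem efun_lower_bound (n : ℕ) (hn : 2 ≤ n) (v : Fin n → ℝ) (u : M0 n) :
    eNorm v ^ 2 / 2 ≤ efun n (v, u) ∧
    (eNorm v ^ 2 / 2 = efun n (v, u) ↔
      (u : Matrix (Fin n) (Fin n) ℝ) =
        Matrix.vecMulVec v v - ((eNorm v ^ 2) / n) • (1 : Matrix (Fin n) (Fin n) ℝ)) := by
  have hnpos : (0 : ℝ) < n := by positivity
  have hnne : (n : ℝ) ≠ 0 := ne_of_gt hnpos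
  haveI : Nonempty (Fin n) := ⟨⟨0, by omega⟩⟩
  set A : Matrix (Fin n) (Fin n) ℝ := Matrix.vecMulVec v v - (u : Matrix (Fin n) (Fin n) ℝ)
    with hAdef
  have hA : A.IsHermitian := herm_aux v u
  set t : ℝ := eNorm v ^ 2 with htdef
  have ht : t = ∑ i, v i ^ 2 := Real.sq_sqrt (by positivity)
  have htr : A.trace = t := by
    rw [hAdef, Matrix.trace_sub, u.2.2, sub_zero, ht]
    simp [Matrix.trace, Matrix.diag, Matrix.vecMulVec_apply, sq]
  have hsum : ∑ i, hA.eigenvalues i = t := by rw [sum_eig_eq_trace hA, htr]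
  set L : ℝ := ⨆ i, hA.eigenvalues i with hLdef
  have hle : ∀ i, hA.eigenvalues i ≤ L :=
    fun i => le_ciSup (Set.Finite.bddAbove (Set.finite_range _)) i
  have hbound : t ≤ n * L := by
    calc t = ∑ i, hA.eigenvalues i := hsum.symm
    _ ≤ ∑ _i : Fin n, L := Finset.sum_le_sum fun i _ => hle i
    _ = n * L := by rw [Finset.sum_const, Finset.card_univ, Fintype.card_fin, nsmul_eq_mul]
  have hefun : efun n (v, u) = ((n : ℝ) / 2) * L := rfl
  constructor
  · rw [hefun]; linarith
  constructor
  · -- equality implies u has the given form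
    intro h
    rw [hefun] at h
    have hL : L = t / n := by field_simp at h ⊢; linarith
    have hall : ∀ i, hA.eigenvalues i = t / n := by
      by_contra hc
      push_neg at hc
      obtain ⟨j, hj⟩ := hc
      have hjlt : hA.eigenvalues j < L := lt_of_le_of_ne (hle j) (by rw [hL]; exact hj)
      have : ∑ i, hA.eigenvalues i < ∑ _i : Fin n, L :=
        Finset.sum_lt_sum (fun i _ => hle i) ⟨j, Finset.mem_univ j, hjlt⟩
      rw [hsum, Finset.sum_const, Finset.card_univ, Fintype.card_fin, nsmul_eq_mul, hL] at this
      field_simp at this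
      linarith
    have hAeq : A = (t / n) • (1 : Matrix (Fin n) (Fin n) ℝ) :=
      eq_smul_one_of_eig_const hA _ hall
    rw [hAdef] at hAeq
    rw [← hAeq, sub_sub_cancel]
  · -- the given form implies equality
    intro h
    have hAeq : A = (t / n) • (1 : Matrix (Fin n) (Fin n) ℝ) := by
      rw [hAdef, h]; ring_nf; rw [sub_sub_cancel]
    have hall := eig_smul_one hA (t / n) hAeq
    have hL : L = t / n := by
      rw [hLdef]
      simp only [hall]
      exact ciSup_const
    rw [hefun, hL]
    field_simp

end
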